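/- Let (fₙ)_{n≥0} be a sequence of positive reals, and suppose there exist λ > 1, an integer N ≥ 1, and positive reals C₀, …, C_{N−1} such that fₙ = C_{n mod N}λⁿ + o(λⁿ) (i.e. fₙλ^{−n} − C_{n mod N} → 0). Then the opposite-series set Ω(P) of P(t) = Σ fₙtⁿ is finite, with at most N elements: for each residue r mod N, the polynomials Xₙ(P) with n ≡ r (mod N) converge coefficientwise to the power series Σ_{k≥0} (C_{(r−k) mod N}/C_r) λ^{−k} s^k, and Ω(P) is contained in the set of these N series. -/

import Mathlib

open SimpleGraph Filter

namespace CF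

variable {V : Type*}

/-- A walk in a graph is a geodesic if its length realizes the graph distance
between its endpoints. -/
def IsGeodesic (G : SimpleGraph V) {u v : V} (p : G.Walk u v) : Prop :=
  p.length = G.dist u v

/-- `G` is δ-hyperbolic: every geodesic triangle is δ-thin, i.e. each side lies
in the δ-neighborhood of the union of the other two sides. -/
def IsDeltaHyperbolic (G : SimpleGraph V) (δ : ℝ) : Prop :=
  ∀ ⦃a b c : V⦄ (p : G.Walk a b) (q : G.Walk b c) (r : G.Walk a c),
    IsGeodesic G p → IsGeodesic G q → IsGeodesic G r →
      (∀ z ∈ p.support, ∃ w, (w ∈ q.support ∨ w ∈ r.support) ∧ (G.dist z w : ℝ) ≤ δ) ∧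
      (∀ z ∈ q.support, ∃ w, (w ∈ p.support ∨ w ∈ r.support) ∧ (G.dist z w : ℝ) ≤ δ) ∧
      (∀ z ∈ r.support, ∃ w, (w ∈ p.support ∨ w ∈ q.support) ∧ (G.dist z w : ℝ) ≤ δ)

/-- `G` has uniformly finite valence. -/
def UnifFiniteValence (G : SimpleGraph V) : Prop :=
  ∃ D : ℕ, ∀ v : V, (G.neighborSet v).Finite ∧ (G.neighborSet v).ncard ≤ D

/-- The automorphism group of `G` acts transitively on vertices. -/
def VertexTransitive (G : SimpleGraph V) : Prop :=
  ∀ u v : V, ∃ φ : G ≃g G, φ u = v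

/-- A δ-hyperbolike graph: connected, of uniformly finite valence, δ-hyperbolic
(with δ ≥ 0), and vertex-transitive. -/
def Hyperbolike (G : SimpleGraph V) (δ : ℝ) : Prop :=
  G.Connected ∧ UnifFiniteValence G ∧ 0 ≤ δ ∧ IsDeltaHyperbolic G δ ∧ VertexTransitive G

/-- The ball of radius `n` about `x` (as a vertex set). -/
def ball (G : SimpleGraph V) (x : V) (n : ℕ) : Set V := {y | G.dist x y ≤ n}

/-- A formal power series over ℝ is rational if `q·P = p` for polynomials `p`, `q`
with `q(0) ≠ 0`. -/
def IsRationalPS (P : PowerSeries ℝ) : Prop :=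
  ∃ p q : Polynomial ℝ, q.coeff 0 ≠ 0 ∧ (q : PowerSeries ℝ) * P = (p : PowerSeries ℝ)

/-- Two geodesics starting at the same point `T`-synchronously fellow travel:
`d(γ(ℓ−i), γ′(ℓ′−i)) ≤ T` for all `0 ≤ i ≤ min(ℓ,ℓ′)`. -/
def SyncFellowTravel (G : SimpleGraph V) (T : ℝ) {x y z : V}
    (p : G.Walk x y) (q : G.Walk x z) : Prop :=
  ∀ i : ℕ, i ≤ min p.length q.length →
    (G.dist (p.getVert (p.length - i)) (q.getVert (q.length - i)) : ℝ) ≤ T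

/-- `z` is a competitor of `y` (with respect to the base point `x`):
`z ∈ B_{2δ+1}(y)`, `d(x,z) ≤ d(x,y)`, and some geodesic from `x` to `z`
`(2δ+1)`-synchronously fellow travels every geodesic from `x` to `y`. -/
def Competitor (G : SimpleGraph V) (δ : ℝ) (x y z : V) : Prop :=
  (G.dist y z : ℝ) ≤ 2*δ+1 ∧ G.dist x z ≤ G.dist x y ∧
  ∃ p : G.Walk x z, IsGeodesic G p ∧
    ∀ q : G.Walk x y, IsGeodesic G q → SyncFellowTravel G (2*δ+1) p q

/-- `F` is a tournament at `y` (with base point `x`); only the values of `F` on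
the ball `B_{2δ+1}(y)` are constrained. -/
def Tournament (G : SimpleGraph V) (δ : ℝ) (x y : V) (F : V → ℤ) : Prop :=
  (∀ z : V, (G.dist y z : ℝ) ≤ 2*δ+1 →
    (G.dist x z : ℤ) - (G.dist x y : ℤ) ≤ F z ∧ F z ≤ (G.dist y z : ℤ)) ∧
  (∀ z : V, Competitor G δ x y z → (G.dist x z : ℤ) = (G.dist x y : ℤ) + F z)

/-- Tournaments `(y,F)` and `(y',F')` have the same type: some automorphism `φ`
carries `y` to `y'` with `F = F' ∘ φ` (on the ball `B_{2δ+1}(y)`). -/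
def SameTournamentType (G : SimpleGraph V) (δ : ℝ) (y y' : V) (F F' : V → ℤ) : Prop :=
  ∃ φ : G ≃g G, φ y = y' ∧ ∀ z : V, (G.dist y z : ℝ) ≤ 2*δ+1 → F z = F' (φ z)

/-- The cone of `y` with respect to the base point `x`. -/
def cone (G : SimpleGraph V) (x y : V) : Set V :=
  {z | G.dist x z = G.dist x y + G.dist y z}

/-- There is a quasi-isometry from the vertices of `G` (with the path metric) to ℝ. -/
def QuasiIsometricToReal (G : SimpleGraph V) : Prop :=
  ∃ (f : V → ℝ) (C : ℝ), 1 ≤ C ∧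
    (∀ u v : V, (G.dist u v : ℝ)/C - C ≤ |f u - f v| ∧ |f u - f v| ≤ C * G.dist u v + C) ∧
    (∀ r : ℝ, ∃ v : V, |r - f v| ≤ C)

/-- `G` is nonelementary: infinitely many vertices and not quasi-isometric to ℝ. -/
def Nonelementary (G : SimpleGraph V) : Prop :=
  Infinite V ∧ ¬ QuasiIsometricToReal G

/-- `ω` is an opposite series of the power series with (positive) coefficients `a`:
the polynomials `Xₙ(P)(s) = Σ_{k≤n} (a_{n-k}/aₙ) s^k` accumulate coefficientwise at `ω`
along some strictly increasing sequence of indices. -/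
def OppositeSeries (a : ℕ → ℝ) (ω : ℕ → ℝ) : Prop :=
  ∃ φ : ℕ → ℕ, StrictMono φ ∧
    ∀ k : ℕ, Tendsto (fun j => a (φ j - k) / a (φ j)) atTop (nhds (ω k))

end CF

namespace CF

private lemma key_aux (f : ℕ → ℝ) (lam : ℝ) (N : ℕ)
    (c : ZMod N → ℝ)
    (ho : Tendsto (fun n : ℕ => f n / lam^n - c (n : ZMod N)) atTop (nhds 0))
    (ψ : ℕ → ℕ) (hψ : Tendsto ψ atTop atTop) (ρ : ZMod N)
    (hρ : ∀ᶠ j in atTop, ((ψ j : ℕ) : ZMod N) = ρ) :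
    Tendsto (fun j => f (ψ j) / lam ^ (ψ j)) atTop (nhds (c ρ)) := by
  have h1 : Tendsto (fun j => f (ψ j) / lam ^ (ψ j) - c ((ψ j : ℕ) : ZMod N))
      atTop (nhds 0) := ho.comp hψ
  have h2 : Tendsto (fun j => f (ψ j) / lam ^ (ψ j) - c ρ) atTop (nhds 0) := by
    refine h1.congr' ?_
    filter_upwards [hρ] with j hj
    rw [hj]
  have := h2.add_const (c ρ)
  simpa using this

private lemma main_aux (f : ℕ → ℝ) (hf : ∀ n, 0 < f n)
    (lam : ℝ) (hlam : 1 < lam) (N : ℕ)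
    (c : ZMod N → ℝ) (hc : ∀ r, 0 < c r)
    (ho : Tendsto (fun n : ℕ => f n / lam^n - c (n : ZMod N)) atTop (nhds 0))
    (ψ : ℕ → ℕ) (hψ : Tendsto ψ atTop atTop) (ρ : ZMod N)
    (hρ : ∀ j, ((ψ j : ℕ) : ZMod N) = ρ) (k : ℕ) :
    Tendsto (fun j => f (ψ j - k) / f (ψ j)) atTop
      (nhds (c (ρ - (k : ZMod N)) / c ρ * lam⁻¹ ^ k)) := by
  have hlam0 : (0:ℝ) < lam := zero_lt_one.trans hlam
  have hge : ∀ᶠ j in atTop, k ≤ ψ j := hψ.eventually_ge_atTop k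
  have hψ' : Tendsto (fun j => ψ j - k) atTop atTop :=
    (Filter.tendsto_sub_atTop_nat k).comp hψ
  have hρ' : ∀ᶠ j in atTop, (((ψ j - k : ℕ)) : ZMod N) = ρ - (k : ZMod N) := by
    filter_upwards [hge] with j hj
    rw [Nat.cast_sub hj, hρ j]
  have hnum := key_aux f lam N c ho (fun j => ψ j - k) hψ' _ hρ'
  have hden := key_aux f lam N c ho ψ hψ ρ (Filter.Eventually.of_forall hρ)
  have hlim := (hnum.div hden (hc ρ).ne').mul_const (lam⁻¹ ^ k)
  refine hlim.congr' ?_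
  filter_upwards [hge] with j hj
  have hfn := (hf (ψ j)).ne'
  have hfnk := (hf (ψ j - k)).ne'
  have hl1 : lam ^ (ψ j - k) ≠ 0 := (pow_pos hlam0 _).ne'
  have hl2 : lam ^ (ψ j) ≠ 0 := (pow_pos hlam0 _).ne'
  have hl3 : lam ^ k ≠ 0 := (pow_pos hlam0 _).ne'
  have hpow : lam ^ (ψ j - k) * lam ^ k = lam ^ (ψ j) := pow_sub_mul_pow lam hj
  simp only [Pi.div_apply]
  rw [← hpow]
  field_simp
  rw [← mul_pow, mul_one_div_cancel hlam0.ne', one_pow]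

/-- if `fₙ = C_{n mod N} λⁿ + o(λⁿ)` with positive `C_r` and `λ > 1`,
then along each residue class `r mod N` the opposite polynomials converge
coefficientwise to `Σ_k (C_{(r−k) mod N}/C_r) λ^{−k} s^k`; hence `Ω(P)` is contained
in this set of `N` series, is finite, and has at most `N` elements. -/
theorem opposite_series_of_periodic_asymptotics (f : ℕ → ℝ) (hf : ∀ n, 0 < f n)
    (lam : ℝ) (hlam : 1 < lam) (N : ℕ) (hN : 0 < N)
    (c : ZMod N → ℝ) (hc : ∀ r, 0 < c r)
    (ho : Tendsto (fun n : ℕ => f n / lam^n - c (n : ZMod N)) atTop (nhds 0)) :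
    (∀ r : ℕ, r < N → ∀ k : ℕ,
        Tendsto (fun j : ℕ => f (N*j + r - k) / f (N*j + r)) atTop
          (nhds (c ((r : ZMod N) - (k : ZMod N)) / c (r : ZMod N) * lam⁻¹ ^ k))) ∧
    {ω : ℕ → ℝ | OppositeSeries f ω} ⊆
      {ω : ℕ → ℝ | ∃ r : ℕ, r < N ∧
        ω = fun k : ℕ => c ((r : ZMod N) - (k : ZMod N)) / c (r : ZMod N) * lam⁻¹ ^ k} ∧
    {ω : ℕ → ℝ | OppositeSeries f ω}.Finite ∧
    Nat.card {ω : ℕ → ℝ | OppositeSeries f ω} ≤ N := by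
  haveI : NeZero N := ⟨hN.ne'⟩
  set F : ℕ → ℕ → ℝ :=
    fun r k => c ((r : ZMod N) - (k : ZMod N)) / c (r : ZMod N) * lam⁻¹ ^ k with hF
  have part1 : ∀ r : ℕ, r < N → ∀ k : ℕ,
      Tendsto (fun j : ℕ => f (N*j + r - k) / f (N*j + r)) atTop (nhds (F r k)) := by
    intro r hr k
    have hψ : Tendsto (fun j => N*j + r) atTop atTop := by
      apply tendsto_atTop_mono (fun j => ?_) tendsto_id
      calc (j : ℕ) = 1 * j := (one_mul j).symm
        _ ≤ N * j := Nat.mul_le_mul_right j hN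
        _ ≤ N * j + r := Nat.le_add_right _ _
    have hρ : ∀ j, (((N*j + r : ℕ)) : ZMod N) = (r : ZMod N) := by
      intro j; push_cast; simp [ZMod.natCast_self]
    exact main_aux f hf lam hlam N c hc ho _ hψ _ hρ k
  have hsub : {ω : ℕ → ℝ | OppositeSeries f ω} ⊆
      {ω : ℕ → ℝ | ∃ r : ℕ, r < N ∧ ω = F r} := by
    rintro ω ⟨φ, hφ, hconv⟩
    obtain ⟨ρ, hρinf⟩ := Finite.exists_infinite_fiber (fun j : ℕ => ((φ j : ℕ) : ZMod N))
    have hSinf : {j : ℕ | ((φ j : ℕ) : ZMod N) = ρ}.Infinite := by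
      rw [← Set.infinite_coe_iff]
      exact hρinf
    set p : ℕ → Prop := fun j => ((φ j : ℕ) : ZMod N) = ρ with hp
    have hmem : ∀ n, p (Nat.nth p n) := fun n => Nat.nth_mem_of_infinite hSinf n
    have hnthmono : StrictMono (Nat.nth p) := Nat.nth_strictMono hSinf
    have hψ : Tendsto (fun j => φ (Nat.nth p j)) atTop atTop :=
      hφ.tendsto_atTop.comp hnthmono.tendsto_atTop
    have hlim : ∀ k, Tendsto (fun j => f (φ (Nat.nth p j) - k) / f (φ (Nat.nth p j)))
        atTop (nhds (c (ρ - (k : ZMod N)) / c ρ * lam⁻¹ ^ k)) := fun k =>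
      main_aux f hf lam hlam N c hc ho _ hψ ρ hmem k
    have hlim' : ∀ k, Tendsto (fun j => f (φ (Nat.nth p j) - k) / f (φ (Nat.nth p j)))
        atTop (nhds (ω k)) := fun k => (hconv k).comp hnthmono.tendsto_atTop
    refine ⟨ρ.val, ZMod.val_lt ρ, funext fun k => ?_⟩
    have hval : ((ρ.val : ℕ) : ZMod N) = ρ := by
      simp [ZMod.natCast_val, ZMod.cast_id]
    simp only [hF, hval]
    exact tendsto_nhds_unique (hlim' k) (hlim k)
  have himg : {ω : ℕ → ℝ | ∃ r : ℕ, r < N ∧ ω = F r} = F '' (Set.Iio N) := by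
    ext ω
    simp only [Set.mem_image, Set.mem_Iio, Set.mem_setOf_eq]
    exact ⟨fun ⟨r, h1, h2⟩ => ⟨r, h1, h2.symm⟩, fun ⟨r, h1, h2⟩ => ⟨r, h1, h2.symm⟩⟩
  have hfin : {ω : ℕ → ℝ | OppositeSeries f ω}.Finite :=
    Set.Finite.subset (himg ▸ (Set.finite_Iio N).image F) hsub
  refine ⟨part1, hsub, hfin, ?_⟩
  calc Nat.card {ω : ℕ → ℝ | OppositeSeries f ω}
      = Set.ncard {ω : ℕ → ℝ | OppositeSeries f ω} :=
        (Nat.card_coe_set_eq _)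
    _ ≤ Set.ncard {ω : ℕ → ℝ | ∃ r : ℕ, r < N ∧ ω = F r} :=
        Set.ncard_le_ncard hsub (himg ▸ (Set.finite_Iio N).image F)
    _ ≤ Set.ncard (Set.Iio N) := by
        rw [himg]; exact Set.ncard_image_le (Set.finite_Iio N)
    _ = N := by
        rw [← Finset.coe_range, Set.ncard_coe_finset, Finset.card_range]

end CF
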